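/- arXiv:2307.08174 — 2 statements merged into one kernel-verified Lean document; each statement's English description precedes it below -/
import Mathlib

section
/- Let n ≥ 1 and let 2m > 0 be an even integer. The subgroup of U_{2n+1} generated by K_{2m}^V together with the scalar matrices {α·1_{2n+1} : α ∈ E, αᾱ = 1, α ∈ 1+𝔭_E^m} is exactly the group J_{2m}^V of all h ∈ U_{2n+1} such that, in block form with block sizes (n,1,n), the (1,2), (3,2), (2,1) and (2,3) blocks have entries in 𝔭_E^m, the central entry lies in 1+𝔭_E^m, and all other entries lie in 𝔬_E. -/
open Matrix MeasureTheory
open scoped Classical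

noncomputable section

namespace Newforms

variable {E : Type} [Field E]

/-- The subset `𝔭_E^m ⊆ E` for `m : ℤ`, where `𝔭_E = ϖ 𝔬_E`. -/
def Ppow (O : Subring E) (ϖ : E) (m : ℤ) : Set E :=
  {x : E | ∃ y ∈ O, x = ϖ ^ m * y}

/-- `w_k`: the antidiagonal `k × k` matrix with all antidiagonal entries `1`. -/
def wMat (E : Type) [Field E] (k : ℕ) : Matrix (Fin k) (Fin k) E :=
  fun i j => if (i : ℕ) + (j : ℕ) + 1 = k then 1 else 0

/-- `J_{2n} = [[0, wₙ],[−wₙ,0]]`. -/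
def Jmat (E : Type) [Field E] (n : ℕ) : Matrix (Fin (2 * n)) (Fin (2 * n)) E :=
  fun i j => if (i : ℕ) + (j : ℕ) + 1 = 2 * n then (if (i : ℕ) < n then (1 : E) else -1) else 0

/-- The quasi-split even unitary group `U_{2n}`, as a set of matrices:
`ᵗḡ J_{2n} g = J_{2n}`. -/
def USet (σ : E ≃+* E) (n : ℕ) : Set (Matrix (Fin (2 * n)) (Fin (2 * n)) E) :=
  {g | (g.map σ)ᵀ * Jmat E n * g = Jmat E n}

/-- The quasi-split odd unitary group `U_{2n+1}`: `ᵗh̄ w_{2n+1} h = w_{2n+1}`. -/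
def UOddSet (σ : E ≃+* E) (n : ℕ) : Set (Matrix (Fin (2 * n + 1)) (Fin (2 * n + 1)) E) :=
  {h | (h.map σ)ᵀ * wMat E (2 * n + 1) * h = wMat E (2 * n + 1)}

/-- The congruence (shape) conditions defining `K_{2m}^W` inside `U_{2n}`. -/
def KWshape (O : Subring E) (ϖ : E) (n m : ℕ) :
    Set (Matrix (Fin (2 * n)) (Fin (2 * n)) E) :=
  {g | (∀ i j, g i j ∈ O) ∧
    ∀ i j : Fin (2 * n),
      ((i : ℕ) = 0 ∧ (j : ℕ) = 0 → g i j - 1 ∈ Ppow O ϖ m) ∧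
      (0 < (i : ℕ) ∧ (i : ℕ) < 2 * n - 1 ∧ (j : ℕ) = 0 → g i j ∈ Ppow O ϖ m) ∧
      ((i : ℕ) = 2 * n - 1 ∧ (j : ℕ) = 0 → g i j ∈ Ppow O ϖ (2 * m)) ∧
      ((i : ℕ) = 2 * n - 1 ∧ 0 < (j : ℕ) ∧ (j : ℕ) < 2 * n - 1 → g i j ∈ Ppow O ϖ m) ∧
      ((i : ℕ) = 2 * n - 1 ∧ (j : ℕ) = 2 * n - 1 → g i j - 1 ∈ Ppow O ϖ m)}

/-- The compact open subgroup `K_{2m}^W ⊆ U_{2n}`. -/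
def KW (σ : E ≃+* E) (O : Subring E) (ϖ : E) (n m : ℕ) :
    Set (Matrix (Fin (2 * n)) (Fin (2 * n)) E) :=
  KWshape O ϖ n m ∩ USet σ n

/-- The congruence (shape) conditions defining `K_{2m}^V` inside `U_{2n+1}`. -/
def KVshape (O : Subring E) (ϖ : E) (n m : ℕ) :
    Set (Matrix (Fin (2 * n + 1)) (Fin (2 * n + 1)) E) :=
  {h | (∀ i j, h i j ∈ O) ∧
    (∀ i j : Fin (2 * n + 1),
      (((i : ℕ) = n ∧ (j : ℕ) ≠ n) ∨ ((i : ℕ) ≠ n ∧ (j : ℕ) = n) → h i j ∈ Ppow O ϖ m)) ∧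
    (∀ i j : Fin (2 * n + 1), (i : ℕ) = n ∧ (j : ℕ) = n → h i j - 1 ∈ Ppow O ϖ (2 * m))}

/-- The compact open subgroup `K_{2m}^V ⊆ U_{2n+1}`. -/
def KV (σ : E ≃+* E) (O : Subring E) (ϖ : E) (n m : ℕ) :
    Set (Matrix (Fin (2 * n + 1)) (Fin (2 * n + 1)) E) :=
  KVshape O ϖ n m ∩ UOddSet σ n

/-- The shape conditions for `J_{2m}^V` (central entry in `1 + 𝔭_E^m`). -/
def JVshape (O : Subring E) (ϖ : E) (n m : ℕ) :
    Set (Matrix (Fin (2 * n + 1)) (Fin (2 * n + 1)) E) :=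
  {h | (∀ i j, h i j ∈ O) ∧
    (∀ i j : Fin (2 * n + 1),
      (((i : ℕ) = n ∧ (j : ℕ) ≠ n) ∨ ((i : ℕ) ≠ n ∧ (j : ℕ) = n) → h i j ∈ Ppow O ϖ m)) ∧
    (∀ i j : Fin (2 * n + 1), (i : ℕ) = n ∧ (j : ℕ) = n → h i j - 1 ∈ Ppow O ϖ m)}

/-- `x w_k ᵗȳ = Σᵢ xᵢ σ(y_{k-1-i})` for row vectors `x, y ∈ E^k`. -/
def pairW (σ : E ≃+* E) {k : ℕ} (x y : Fin k → E) : E :=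
  ∑ i, x i * σ (y i.rev)

/-- `ψ_E(x) = ψ((x + x̄)/2)`. -/
def psiE (σ : E ≃+* E) (ψ : E → ℂ) (x : E) : ℂ := ψ ((x + σ x) / 2)

def idx0 (k : ℕ) : Fin (2 * (k + 1)) := ⟨0, by omega⟩
def idxLast (k : ℕ) : Fin (2 * (k + 1)) := ⟨2 * k + 1, by omega⟩
def bX {k : ℕ} (i : Fin k) : Fin (2 * (k + 1)) := ⟨(i : ℕ) + 1, by have := i.isLt; omega⟩
def bY {k : ℕ} (i : Fin k) : Fin (2 * (k + 1)) := ⟨(i : ℕ) + (k + 1), by have := i.isLt; omega⟩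
def midIdx {k : ℕ} (i : Fin (2 * k)) : Fin (2 * (k + 1)) :=
  ⟨(i : ℕ) + 1, by have := i.isLt; omega⟩

/-- The Heisenberg element `𝐯(x,y;z) ∈ U_{2n}` (here `n = k+1` and `x, y ∈ E^{n-1} = E^k`). -/
def vMat (σ : E ≃+* E) (k : ℕ) (x y : Fin k → E) (z : E) :
    Matrix (Fin (2 * (k + 1))) (Fin (2 * (k + 1))) E :=
  1 + (∑ i, Matrix.single (idx0 k) (bX i) (x i))
    + (∑ i, Matrix.single (idx0 k) (bY i) (y i))
    + (∑ i, Matrix.single (bX i) (idxLast k) (σ (y i.rev)))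
    + (∑ i, Matrix.single (bY i) (idxLast k) (-σ (x i.rev)))
    + Matrix.single (idx0 k) (idxLast k) (z + (pairW σ x y - pairW σ y x) / 2)

/-- The Heisenberg group `H_{n-1} = {𝐯(x,y;z) | x, y ∈ E^{n-1}, z ∈ F}` (with `n = k+1`). -/
def Hset (σ : E ≃+* E) (k : ℕ) : Set (Matrix (Fin (2 * (k + 1))) (Fin (2 * (k + 1))) E) :=
  {g | ∃ x y : Fin k → E, ∃ z : E, σ z = z ∧ g = vMat σ k x y z}

/-- The embedding `U_{2n-2} → U_{2n}, g' ↦ diag(1, g', 1)` (here `n = k+1`). -/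
def iotaU (k : ℕ) (g : Matrix (Fin (2 * k)) (Fin (2 * k)) E) :
    Matrix (Fin (2 * (k + 1))) (Fin (2 * (k + 1))) E :=
  Matrix.single (idx0 k) (idx0 k) 1
    + Matrix.single (idxLast k) (idxLast k) 1
    + ∑ i, ∑ j, Matrix.single (midIdx i) (midIdx j) (g i j)

/-- `d_t = diag(t, 1_{2n-2}, t̄⁻¹)`. -/
def dtW (σ : E ≃+* E) (n : ℕ) (t : E) : Matrix (Fin (2 * n)) (Fin (2 * n)) E :=
  Matrix.diagonal fun i =>
    if (i : ℕ) = 0 then t else if (i : ℕ) = 2 * n - 1 then (σ t)⁻¹ else 1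

/-- `diag(ϖ^{-m}, 1_{2n-2}, ϖ^m)`. -/
def dWmat (ϖ : E) (n : ℕ) (m : ℤ) : Matrix (Fin (2 * n)) (Fin (2 * n)) E :=
  Matrix.diagonal fun i =>
    if (i : ℕ) = 0 then ϖ ^ (-m) else if (i : ℕ) = 2 * n - 1 then ϖ ^ m else 1

/-- `diag(ϖ^{-m}·1_n, 1, ϖ^m·1_n)`. -/
def dVmat (ϖ : E) (n : ℕ) (m : ℤ) : Matrix (Fin (2 * n + 1)) (Fin (2 * n + 1)) E :=
  Matrix.diagonal fun i =>
    if (i : ℕ) < n then ϖ ^ (-m) else if (i : ℕ) = n then 1 else ϖ ^ m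

/-- The span of `{π(𝐯(0,0;z)) v − χ(z) v}`: the kernel of `π ↠ π_χ`. -/
def FJkernel (σ : E ≃+* E) (k : ℕ) {V : Type} [AddCommGroup V] [Module ℂ V]
    (π : Matrix (Fin (2 * (k + 1))) (Fin (2 * (k + 1))) E → (V →ₗ[ℂ] V)) (χ : E → ℂ) :
    Submodule ℂ V :=
  Submodule.span ℂ {w | ∃ z : E, σ z = z ∧ ∃ v : V, w = π (vMat σ k 0 0 z) v - χ z • v}

/-- The submodule `π^K` of `K`-fixed vectors. -/
def fixedSub {V : Type} [AddCommGroup V] [Module ℂ V] {α : Type}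
    (π : α → (V →ₗ[ℂ] V)) (K : Set α) : Submodule ℂ V where
  carrier := {v | ∀ g ∈ K, π g v = v}
  add_mem' := by
    intro a b ha hb g hg
    rw [map_add, ha g hg, hb g hg]
  zero_mem' := by
    intro g hg
    exact map_zero _
  smul_mem' := by
    intro c v hv g hg
    rw [_root_.map_smul, hv g hg]

/-- The skew-hermitian form on `W = E^{2n}` in the basis `f_n, …, f_1, f_{-1}, …, f_{-n}`. -/
def formW (σ : E ≃+* E) (n : ℕ) (u v : Fin (2 * n) → E) : E :=
  ∑ i : Fin (2 * n), σ (u i) * v i.rev * (if (i : ℕ) < n then 1 else -1)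

/-- The lattice `(⊕_{i≠0} 𝔬_E e_i) ⊕ 𝔭_E^m e_0` in `V = E^{2n+1}` (coordinate `n` is `e_0`). -/
def MVlat (O : Subring E) (ϖ : E) (n : ℕ) (m : ℤ) : Set (Fin (2 * n + 1) → E) :=
  {u | (∀ i : Fin (2 * n + 1), (i : ℕ) ≠ n → u i ∈ O) ∧
       ∀ i : Fin (2 * n + 1), (i : ℕ) = n → u i ∈ Ppow O ϖ m}

/-- The lattice `(⊕_{i≠-n} 𝔬_E f_i) ⊕ 𝔭_E^m f_{-n}` in `W = E^{2n}`
(coordinate `2n-1` is `f_{-n}`). -/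
def NWlat (O : Subring E) (ϖ : E) (n : ℕ) (m : ℤ) : Set (Fin (2 * n) → E) :=
  {u | (∀ i : Fin (2 * n), (i : ℕ) ≠ 2 * n - 1 → u i ∈ O) ∧
       ∀ i : Fin (2 * n), (i : ℕ) = 2 * n - 1 → u i ∈ Ppow O ϖ m}

/-- The lattice `𝔭_E^m f_n ⊕ (⊕_{i≠n} 𝔬_E f_i)` in `W = E^{2n}` (coordinate `0` is `f_n`). -/
def NWdual (O : Subring E) (ϖ : E) (n : ℕ) (m : ℤ) : Set (Fin (2 * n) → E) :=
  {u | (∀ i : Fin (2 * n), (i : ℕ) ≠ 0 → u i ∈ O) ∧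
       ∀ i : Fin (2 * n), (i : ℕ) = 0 → u i ∈ Ppow O ϖ m}

/-- `𝕎 = V ⊗_E W` realized as `(2n+1) × 2n` matrices via the bases `(e_i)` and `(f_j)`;
this is `⟨T, T'⟩_V ⊗ ⟨,⟩_W`-pairing before taking the trace to `F`. -/
def formVW (σ : E ≃+* E) (n : ℕ) (T T' : Matrix (Fin (2 * n + 1)) (Fin (2 * n)) E) : E :=
  ∑ i, ∑ j, σ (T i j) * T' i.rev j.rev * (if (j : ℕ) < n then 1 else -1)

/-- The symplectic `F`-bilinear form `⟨v⊗w, v'⊗w'⟩ = tr_{E/F}(⟨v,v'⟩_V ⟨w,w'⟩_W)` on `𝕎`. -/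
def sympForm (σ : E ≃+* E) (n : ℕ) (T T' : Matrix (Fin (2 * n + 1)) (Fin (2 * n)) E) : E :=
  formVW σ n T T' + σ (formVW σ n T T')

/-- The self-dual lattice `A = Γ_V ⊗ Γ_W ⊆ 𝕎`. -/
def ASet (O : Subring E) (n : ℕ) : Set (Matrix (Fin (2 * n + 1)) (Fin (2 * n)) E) :=
  {T | ∀ i j, T i j ∈ O}

/-- The Weyl-type element `w_{1,n-1} ∈ U_{2n}` (here `n = k+1`). -/
def w1Mat (E : Type) [Field E] (k : ℕ) : Matrix (Fin (2 * (k + 1))) (Fin (2 * (k + 1))) E :=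
  (∑ i : Fin k, Matrix.single (⟨(i : ℕ), by have := i.isLt; omega⟩ : Fin (2 * (k + 1)))
      ⟨(i : ℕ) + 1, by have := i.isLt; omega⟩ 1)
  + Matrix.single (⟨k, by omega⟩ : Fin (2 * (k + 1))) ⟨0, by omega⟩ 1
  + Matrix.single (⟨k + 1, by omega⟩ : Fin (2 * (k + 1))) ⟨2 * k + 1, by omega⟩ 1
  + (∑ i : Fin k, Matrix.single
      (⟨k + 2 + (i : ℕ), by have := i.isLt; omega⟩ : Fin (2 * (k + 1)))
      ⟨k + 1 + (i : ℕ), by have := i.isLt; omega⟩ 1)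

/-- `𝐦(a) = diag(1, a, w_{n-1} ᵗā⁻¹ w_{n-1}⁻¹, 1) ∈ U_{2n}` (here `n = k+1`). -/
def mMatBig (σ : E ≃+* E) (k : ℕ) (a : Matrix (Fin k) (Fin k) E) :
    Matrix (Fin (2 * (k + 1))) (Fin (2 * (k + 1))) E :=
  Matrix.single (idx0 k) (idx0 k) 1
    + Matrix.single (idxLast k) (idxLast k) 1
    + (∑ i, ∑ j, Matrix.single (bX i) (bX j) (a i j))
    + (∑ i, ∑ j, Matrix.single (bY i) (bY j)
        ((wMat E k * ((a⁻¹).map σ)ᵀ * (wMat E k)⁻¹) i j))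

/-- The unipotent element `g_u` with `ᵗu` in block position `(1,2)` and `−ū w_{n-1}` in block
position `(3,4)` (block sizes `(n-1,1,1,n-1)`, `n = k+1`). -/
def gUMat (σ : E ≃+* E) (k : ℕ) (u : Fin k → E) :
    Matrix (Fin (2 * (k + 1))) (Fin (2 * (k + 1))) E :=
  1 + (∑ i : Fin k, Matrix.single
        (⟨(i : ℕ), by have := i.isLt; omega⟩ : Fin (2 * (k + 1))) ⟨k, by omega⟩ (u i))
    + (∑ j : Fin k, Matrix.single (⟨k + 1, by omega⟩ : Fin (2 * (k + 1)))
        ⟨k + 2 + (j : ℕ), by have := j.isLt; omega⟩ (-σ (u j.rev)))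

/-- The pure tensor `e_0 ⊗ w ∈ 𝕎` in matrix coordinates. -/
def e0tensor {E : Type} [Field E] (n : ℕ) (w : Fin (2 * n) → E) :
    Matrix (Fin (2 * n + 1)) (Fin (2 * n)) E :=
  fun i j => if (i : ℕ) = n then w j else 0

/-- The lattice-model function `φ_{t,w}`, supported on `A + t e_0 ⊗ w` with
`φ_{t,w}(a + t e_0 ⊗ w) = ψ(−½⟨a, t e_0 ⊗ w⟩)`. -/
def phiTW (σ : E ≃+* E) (O : Subring E) (ψ : E → ℂ) (n : ℕ) (t : E) (w : Fin (2 * n) → E)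
    (u : Matrix (Fin (2 * n + 1)) (Fin (2 * n)) E) : ℂ :=
  if (∀ i j, (u - t • e0tensor n w) i j ∈ O) then
    ψ (-sympForm σ n (u - t • e0tensor n w) (t • e0tensor n w) / 2)
  else 0

/-- `K_0^W = U_{2n} ∩ GL_{2n}(𝔬_E)`. -/
def K0Set (σ : E ≃+* E) (O : Subring E) (n : ℕ) :
    Set (Matrix (Fin (2 * n)) (Fin (2 * n)) E) :=
  {g | g ∈ USet σ n ∧ ∀ i j, g i j ∈ O}

/-- `Y ⊆ E^{2n}`: the span of the first `n` coordinates. -/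
def YSet (E : Type) [Field E] (n : ℕ) : Set (Fin (2 * n) → E) :=
  {v | ∀ i : Fin (2 * n), n ≤ (i : ℕ) → v i = 0}

/-- The Siegel parabolic `Q_{2n} = {g ∈ U_{2n} : g Y = Y}`. -/
def QSet (σ : E ≃+* E) (n : ℕ) : Set (Matrix (Fin (2 * n)) (Fin (2 * n)) E) :=
  {g | g ∈ USet σ n ∧ (fun v => g.mulVec v) '' YSet E n = YSet E n}

/-- `K_S`: elements of `K_0^W` whose lower-left `n × n` block has entries in `𝔭_E`. -/
def KSSet (σ : E ≃+* E) (O : Subring E) (ϖ : E) (n : ℕ) :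
    Set (Matrix (Fin (2 * n)) (Fin (2 * n)) E) :=
  {g | g ∈ K0Set σ O n ∧
    ∀ i j : Fin (2 * n), n ≤ (i : ℕ) → (j : ℕ) < n → g i j ∈ Ppow O ϖ 1}

/-- `K_M`: elements of `K_0^W` with blocks `(2,1)`, `(3,1)`, `(3,2)` (block sizes
`(1, 2n-2, 1)`) having entries in `𝔭_E`. -/
def KMSet (σ : E ≃+* E) (O : Subring E) (ϖ : E) (n : ℕ) :
    Set (Matrix (Fin (2 * n)) (Fin (2 * n)) E) :=
  {g | g ∈ K0Set σ O n ∧ ∀ i j : Fin (2 * n),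
      ((0 < (i : ℕ) ∧ (j : ℕ) = 0) ∨ ((i : ℕ) = 2 * n - 1 ∧ (j : ℕ) < 2 * n - 1)) →
      g i j ∈ Ppow O ϖ 1}

/-- The Schwartz space `𝒮(E^k)` of locally constant compactly supported functions, as a
`ℂ`-submodule of all functions. -/
def SMod (E : Type) [Field E] [TopologicalSpace E] (k : ℕ) :
    Submodule ℂ ((Fin k → E) → ℂ) where
  carrier := {f | (∀ ξ, ∃ U ∈ nhds ξ, ∀ η ∈ U, f η = f ξ) ∧
                  ∃ C : Set (Fin k → E), IsCompact C ∧ ∀ ξ ∉ C, f ξ = 0}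
  add_mem' := by
    rintro f g ⟨hf1, Cf, hCf, hf2⟩ ⟨hg1, Cg, hCg, hg2⟩
    refine ⟨fun ξ => ?_, Cf ∪ Cg, hCf.union hCg, fun ξ hξ => ?_⟩
    · obtain ⟨U, hU, hUf⟩ := hf1 ξ
      obtain ⟨Vv, hV, hVg⟩ := hg1 ξ
      exact ⟨U ∩ Vv, Filter.inter_mem hU hV, fun η hη => by
        simp only [Pi.add_apply, hUf η hη.1, hVg η hη.2]⟩
    · simp only [Pi.add_apply, hf2 ξ (fun h => hξ (Set.mem_union_left _ h)),
        hg2 ξ (fun h => hξ (Set.mem_union_right _ h)), add_zero]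
  zero_mem' := by
    refine ⟨fun ξ => ⟨Set.univ, Filter.univ_mem, fun η _ => rfl⟩,
      ∅, isCompact_empty, fun ξ _ => rfl⟩
  smul_mem' := by
    rintro c f ⟨hf1, Cf, hCf, hf2⟩
    refine ⟨fun ξ => ?_, Cf, hCf, fun ξ hξ => ?_⟩
    · obtain ⟨U, hU, hUf⟩ := hf1 ξ
      exact ⟨U, hU, fun η hη => by simp only [Pi.smul_apply, hUf η hη]⟩
    · simp only [Pi.smul_apply, hf2 ξ hξ, smul_zero]

end Newforms

namespace Newforms

section Aux7
variable {E : Type} [Field E]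

lemma pp_zero (O : Subring E) (ϖ : E) (k : ℤ) : (0:E) ∈ Ppow O ϖ k :=
  ⟨0, O.zero_mem, by ring⟩

lemma pp_add {O : Subring E} {ϖ : E} {k : ℤ} {x y : E}
    (hx : x ∈ Ppow O ϖ k) (hy : y ∈ Ppow O ϖ k) : x + y ∈ Ppow O ϖ k := by
  obtain ⟨a, ha, rfl⟩ := hx; obtain ⟨b, hb, rfl⟩ := hy
  exact ⟨a + b, O.add_mem ha hb, by ring⟩

lemma pp_neg {O : Subring E} {ϖ : E} {k : ℤ} {x : E}
    (hx : x ∈ Ppow O ϖ k) : -x ∈ Ppow O ϖ k := by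
  obtain ⟨a, ha, rfl⟩ := hx; exact ⟨-a, O.neg_mem ha, by ring⟩

lemma pp_sub {O : Subring E} {ϖ : E} {k : ℤ} {x y : E}
    (hx : x ∈ Ppow O ϖ k) (hy : y ∈ Ppow O ϖ k) : x - y ∈ Ppow O ϖ k := by
  rw [sub_eq_add_neg]; exact pp_add hx (pp_neg hy)

lemma pp_smul {O : Subring E} {ϖ : E} {k : ℤ} {x c : E}
    (hc : c ∈ O) (hx : x ∈ Ppow O ϖ k) : c * x ∈ Ppow O ϖ k := by
  obtain ⟨a, ha, rfl⟩ := hx; exact ⟨c * a, O.mul_mem hc ha, by ring⟩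

lemma pp_smul' {O : Subring E} {ϖ : E} {k : ℤ} {x c : E}
    (hc : c ∈ O) (hx : x ∈ Ppow O ϖ k) : x * c ∈ Ppow O ϖ k := by
  rw [mul_comm]; exact pp_smul hc hx

lemma pp_mul {O : Subring E} {ϖ : E} (hϖ0 : ϖ ≠ 0) {k l : ℤ} {x y : E}
    (hx : x ∈ Ppow O ϖ k) (hy : y ∈ Ppow O ϖ l) : x * y ∈ Ppow O ϖ (k + l) := by
  obtain ⟨a, ha, rfl⟩ := hx; obtain ⟨b, hb, rfl⟩ := hy
  exact ⟨a * b, O.mul_mem ha hb, by rw [zpow_add₀ hϖ0]; ring⟩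

lemma pp_sum {O : Subring E} {ϖ : E} {k : ℤ} {ι : Type*} (s : Finset ι) (f : ι → E)
    (h : ∀ i ∈ s, f i ∈ Ppow O ϖ k) : ∑ i ∈ s, f i ∈ Ppow O ϖ k :=
  Finset.sum_induction f (· ∈ Ppow O ϖ k) (fun _ _ ha hb => pp_add ha hb) (pp_zero O ϖ k) h

lemma pp_nat {O : Subring E} {ϖ : E} {k : ℕ} {x : E} :
    x ∈ Ppow O ϖ (k : ℤ) ↔ ∃ y ∈ O, x = ϖ ^ k * y := by
  simp only [Ppow, Set.mem_setOf_eq, zpow_natCast]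

lemma pp_subO {O : Subring E} {ϖ : E} (hϖO : ϖ ∈ O) {k : ℕ} {x : E}
    (hx : x ∈ Ppow O ϖ (k : ℤ)) : x ∈ O := by
  obtain ⟨a, ha, rfl⟩ := pp_nat.mp hx
  exact O.mul_mem (O.pow_mem hϖO k) ha

lemma pp_mono {O : Subring E} {ϖ : E} (hϖO : ϖ ∈ O) {k l : ℕ} (hkl : l ≤ k) {x : E}
    (hx : x ∈ Ppow O ϖ (k : ℤ)) : x ∈ Ppow O ϖ (l : ℤ) := by
  obtain ⟨a, ha, rfl⟩ := pp_nat.mp hx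
  refine pp_nat.mpr ⟨ϖ ^ (k - l) * a, O.mul_mem (O.pow_mem hϖO _) ha, ?_⟩
  rw [← mul_assoc, ← pow_add]
  congr 2
  omega

lemma pp_map {O : Subring E} {ϖ : E} (σ : E ≃+* E) (hσO : ∀ x ∈ O, σ x ∈ O)
    (hϖF : σ ϖ = ϖ) {k : ℕ} {x : E} (hx : x ∈ Ppow O ϖ (k : ℤ)) :
    σ x ∈ Ppow O ϖ (k : ℤ) := by
  obtain ⟨a, ha, rfl⟩ := pp_nat.mp hx
  exact pp_nat.mpr ⟨σ a, hσO a ha, by rw [_root_.map_mul, map_pow, hϖF]⟩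

lemma pp_unit {O : Subring E} {ϖ : E} (hϖO : ϖ ∈ O) (hϖnu : ϖ⁻¹ ∉ O)
    (hϖgen : ∀ x ∈ O, x⁻¹ ∉ O → x ∈ Ppow O ϖ 1) {x : E}
    (hx : x ∈ Ppow O ϖ (1 : ℤ)) : 1 + x ≠ 0 ∧ (1 + x)⁻¹ ∈ O := by
  obtain ⟨a, ha, hxe⟩ := hx
  rw [zpow_one] at hxe
  subst hxe
  constructor
  · intro h0
    have h1 : ϖ * (-a) = 1 := by linear_combination -h0
    exact hϖnu ((inv_eq_of_mul_eq_one_right h1) ▸ O.neg_mem ha)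
  · by_contra hninv
    obtain ⟨b, hb, heq⟩ := hϖgen _ (O.add_mem O.one_mem (O.mul_mem hϖO ha)) hninv
    rw [zpow_one] at heq
    have h1 : ϖ * (b - a) = 1 := by linear_combination -heq
    exact hϖnu ((inv_eq_of_mul_eq_one_right h1) ▸ O.sub_mem hb ha)

lemma pp_unit2 {O : Subring E} {ϖ : E} (h2 : (2:E) ≠ 0) (hodd : (2:E)⁻¹ ∈ O)
    (hϖO : ϖ ∈ O) (hϖnu : ϖ⁻¹ ∉ O)
    (hϖgen : ∀ x ∈ O, x⁻¹ ∉ O → x ∈ Ppow O ϖ 1) {x : E}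
    (hx : x ∈ Ppow O ϖ (1 : ℤ)) : 2 + x ≠ 0 ∧ (2 + x)⁻¹ ∈ O := by
  have hx2 : (2:E)⁻¹ * x ∈ Ppow O ϖ (1:ℤ) := pp_smul hodd hx
  obtain ⟨hne, hinv⟩ := pp_unit hϖO hϖnu hϖgen hx2
  have he : 2 + x = 2 * (1 + 2⁻¹ * x) := by
    field_simp
  constructor
  · rw [he]; exact mul_ne_zero h2 hne
  · rw [he, mul_inv]
    exact O.mul_mem hodd hinv

end Aux7

section MatAux
variable {E : Type} [Field E]

lemma wMul_apply {K : ℕ} (M : Matrix (Fin K) (Fin K) E) (i j : Fin K) :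
    (wMat E K * M) i j = M i.rev j := by
  rw [Matrix.mul_apply]
  rw [Finset.sum_eq_single i.rev]
  · have h1 := i.isLt
    have h2 := Fin.val_rev i
    simp only [wMat]
    rw [if_pos (by omega), one_mul]
  · intro k _ hk
    simp only [wMat]
    rw [if_neg, zero_mul]
    intro hc
    apply hk
    apply Fin.ext
    have := Fin.val_rev i
    have := i.isLt
    omega
  · intro h; exact absurd (Finset.mem_univ _) h

lemma mulW_apply {K : ℕ} (M : Matrix (Fin K) (Fin K) E) (i j : Fin K) :
    (M * wMat E K) i j = M i j.rev := by
  rw [Matrix.mul_apply]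
  rw [Finset.sum_eq_single j.rev]
  · have h1 := j.isLt
    have h2 := Fin.val_rev j
    simp only [wMat]
    rw [if_pos (by omega), mul_one]
  · intro k _ hk
    simp only [wMat]
    rw [if_neg, mul_zero]
    intro hc
    apply hk
    apply Fin.ext
    have := Fin.val_rev j
    have := j.isLt
    omega
  · intro h; exact absurd (Finset.mem_univ _) h

lemma wMat_mul_self (K : ℕ) : wMat E K * wMat E K = 1 := by
  ext i j
  rw [wMul_apply]
  have hi := i.isLt
  have hj := j.isLt
  have hr := Fin.val_rev i
  simp only [wMat, Matrix.one_apply]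
  by_cases h : i = j
  · subst h
    rw [if_pos (by omega), if_pos rfl]
  · rw [if_neg, if_neg h]
    intro hc
    exact h (Fin.ext (by omega))

variable (σ : E ≃+* E)

lemma mat_map_mul {K : ℕ} (M N : Matrix (Fin K) (Fin K) E) :
    (M * N).map ⇑σ = M.map ⇑σ * N.map ⇑σ := by
  ext i j
  simp only [Matrix.map_apply, Matrix.mul_apply]
  rw [map_sum]
  exact Finset.sum_congr rfl fun k _ => _root_.map_mul σ _ _

lemma mat_map_map (hσinv : ∀ x, σ (σ x) = x) {K : ℕ} (M : Matrix (Fin K) (Fin K) E) :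
    (M.map ⇑σ).map ⇑σ = M := by
  ext i j; simp [Matrix.map_apply, hσinv]

lemma mat_map_one {K : ℕ} : (1 : Matrix (Fin K) (Fin K) E).map ⇑σ = 1 := by
  ext i j
  simp only [Matrix.map_apply, Matrix.one_apply, apply_ite, _root_.map_one, map_zero]
  split <;> simp

lemma mat_map_w {K : ℕ} : (wMat E K).map ⇑σ = wMat E K := by
  ext i j
  simp only [Matrix.map_apply, wMat, apply_ite, _root_.map_one, map_zero]
  split <;> simp

lemma mat_map_smul {K : ℕ} (c : E) (M : Matrix (Fin K) (Fin K) E) :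
    (c • M).map ⇑σ = σ c • M.map ⇑σ := by
  ext i j
  simp only [Matrix.map_apply, Matrix.smul_apply, smul_eq_mul, _root_.map_mul]

lemma uodd_one (n : ℕ) : (1 : Matrix (Fin (2*n+1)) (Fin (2*n+1)) E) ∈ UOddSet σ n := by
  show (Matrix.map 1 ⇑σ)ᵀ * _ * 1 = _
  rw [mat_map_one, Matrix.transpose_one, Matrix.one_mul, Matrix.mul_one]

lemma uodd_mul {n : ℕ} {g h : Matrix (Fin (2*n+1)) (Fin (2*n+1)) E}
    (hg : g ∈ UOddSet σ n) (hh : h ∈ UOddSet σ n) : g * h ∈ UOddSet σ n := by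
  have hg' : (g.map ⇑σ)ᵀ * wMat E (2*n+1) * g = wMat E (2*n+1) := hg
  have hh' : (h.map ⇑σ)ᵀ * wMat E (2*n+1) * h = wMat E (2*n+1) := hh
  show ((g * h).map ⇑σ)ᵀ * wMat E (2*n+1) * (g * h) = wMat E (2*n+1)
  calc ((g * h).map ⇑σ)ᵀ * wMat E (2*n+1) * (g * h)
      = (h.map ⇑σ)ᵀ * ((g.map ⇑σ)ᵀ * wMat E (2*n+1) * g) * h := by
        rw [mat_map_mul, Matrix.transpose_mul]
        simp only [Matrix.mul_assoc]
    _ = wMat E (2*n+1) := by rw [hg']; exact hh'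

lemma uodd_inv {n : ℕ} {h : Matrix (Fin (2*n+1)) (Fin (2*n+1)) E}
    (hσinv : ∀ x, σ (σ x) = x) (hh : h ∈ UOddSet σ n) :
    h⁻¹ = wMat E (2*n+1) * (h.map ⇑σ)ᵀ * wMat E (2*n+1) ∧ h⁻¹ ∈ UOddSet σ n := by
  set w : Matrix (Fin (2*n+1)) (Fin (2*n+1)) E := wMat E (2*n+1) with hw
  have hww : w * w = 1 := wMat_mul_self _
  have hh' : (h.map ⇑σ)ᵀ * w * h = w := hh
  have hleft : (w * (h.map ⇑σ)ᵀ * w) * h = 1 := by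
    calc (w * (h.map ⇑σ)ᵀ * w) * h = w * ((h.map ⇑σ)ᵀ * w * h) := by
          simp only [Matrix.mul_assoc]
      _ = 1 := by rw [hh', hww]
  have hinv : h⁻¹ = w * (h.map ⇑σ)ᵀ * w := Matrix.inv_eq_left_inv hleft
  have hright : h * (w * (h.map ⇑σ)ᵀ * w) = 1 := mul_eq_one_comm.mpr hleft
  refine ⟨hinv, ?_⟩
  show (h⁻¹.map ⇑σ)ᵀ * w * h⁻¹ = w
  have hmap : (h⁻¹.map ⇑σ)ᵀ = w * h * w := by
    rw [hinv, mat_map_mul, mat_map_mul, mat_map_w, Matrix.transpose_map,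
      mat_map_map σ hσinv, Matrix.transpose_mul, Matrix.transpose_mul,
      Matrix.transpose_transpose]
    have hwt : wᵀ = w := by
      ext i j
      simp only [Matrix.transpose_apply, hw, wMat]
      exact if_congr (by omega) rfl rfl
    rw [hwt]
    simp only [Matrix.mul_assoc]
  rw [hmap, hinv]
  calc w * h * w * w * (w * (h.map ⇑σ)ᵀ * w)
      = w * (h * (w * ((w * w) * ((h.map ⇑σ)ᵀ * w)))) := by simp only [Matrix.mul_assoc]
    _ = w * (h * (w * (h.map ⇑σ)ᵀ * w)) := by rw [hww]; simp only [Matrix.one_mul, Matrix.mul_assoc]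
    _ = w := by rw [hright, Matrix.mul_one]

lemma uodd_inv_apply {n : ℕ} {h : Matrix (Fin (2*n+1)) (Fin (2*n+1)) E}
    (hσinv : ∀ x, σ (σ x) = x) (hh : h ∈ UOddSet σ n) (i j : Fin (2*n+1)) :
    h⁻¹ i j = σ (h j.rev i.rev) := by
  rw [(uodd_inv σ hσinv hh).1, mulW_apply, wMul_apply]
  simp [Matrix.transpose_apply, Matrix.map_apply]

lemma uodd_smul {n : ℕ} {α : E} (hα : α * σ α = 1) :
    α • (1 : Matrix (Fin (2*n+1)) (Fin (2*n+1)) E) ∈ UOddSet σ n := by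
  show ((α • 1 : Matrix (Fin (2*n+1)) (Fin (2*n+1)) E).map ⇑σ)ᵀ * wMat E (2*n+1) *
    (α • 1) = wMat E (2*n+1)
  rw [mat_map_smul, mat_map_one, Matrix.transpose_smul, Matrix.transpose_one,
    Matrix.smul_mul, Matrix.one_mul, Matrix.smul_mul, Matrix.mul_smul,
    Matrix.mul_one, smul_smul, mul_comm (σ α) α, hα, one_smul]

end MatAux


section ShapeAux
variable {E : Type} [Field E]

lemma jv_one {O : Subring E} {ϖ : E} {n m : ℕ} :
    (1 : Matrix (Fin (2*n+1)) (Fin (2*n+1)) E) ∈ JVshape O ϖ n m := by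
  refine ⟨fun i j => ?_, fun i j hij => ?_, fun i j hij => ?_⟩
  · rw [Matrix.one_apply]
    split <;> [exact O.one_mem; exact O.zero_mem]
  · rw [Matrix.one_apply, if_neg, ]
    · exact pp_zero O ϖ _
    · rintro rfl
      rcases hij with ⟨h1, h2⟩ | ⟨h1, h2⟩ <;> [exact h2 h1; exact h1 h2]
  · obtain ⟨hi, hj⟩ := hij
    have : i = j := Fin.ext (by omega)
    rw [Matrix.one_apply, if_pos this, sub_self]
    exact pp_zero O ϖ _

lemma jv_mul {O : Subring E} {ϖ : E} (hϖO : ϖ ∈ O) {n m : ℕ}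
    {h h' : Matrix (Fin (2*n+1)) (Fin (2*n+1)) E}
    (hh : h ∈ JVshape O ϖ n m) (hh' : h' ∈ JVshape O ϖ n m) :
    h * h' ∈ JVshape O ϖ n m := by
  obtain ⟨hO, hrc, hc⟩ := hh
  obtain ⟨hO', hrc', hc'⟩ := hh'
  refine ⟨fun i j => ?_, fun i j hij => ?_, fun i j hij => ?_⟩
  · rw [Matrix.mul_apply]
    exact Subring.sum_mem _ fun k _ => O.mul_mem (hO i k) (hO' k j)
  · rw [Matrix.mul_apply]
    apply pp_sum
    intro k _
    rcases hij with ⟨hi, hj⟩ | ⟨hi, hj⟩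
    · by_cases hk : (k : ℕ) = n
      · exact pp_smul (hO i k) (hrc' k j (Or.inl ⟨hk, hj⟩))
      · exact pp_smul' (hO' k j) (hrc i k (Or.inl ⟨hi, hk⟩))
    · by_cases hk : (k : ℕ) = n
      · exact pp_smul' (hO' k j) (hrc i k (Or.inr ⟨hi, hk⟩))
      · exact pp_smul (hO i k) (hrc' k j (Or.inr ⟨hk, hj⟩))
  · obtain ⟨hi, hj⟩ := hij
    have hn : n < 2*n+1 := by omega
    have hi' : i = ⟨n, hn⟩ := Fin.ext hi
    have hj' : j = ⟨n, hn⟩ := Fin.ext hj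
    subst hi' hj'
    set n' : Fin (2*n+1) := ⟨n, hn⟩ with hn'
    rw [Matrix.mul_apply, ← Finset.add_sum_erase _ _ (Finset.mem_univ n')]
    have heq : h n' n' * h' n' n' + (∑ k ∈ Finset.univ.erase n', h n' k * h' k n') - 1
        = ((h n' n' - 1) * h' n' n' + (h' n' n' - 1))
          + ∑ k ∈ Finset.univ.erase n', h n' k * h' k n' := by ring
    rw [heq]
    apply pp_add
    · exact pp_add (pp_smul' (hO' n' n') (hc n' n' ⟨rfl, rfl⟩)) (hc' n' n' ⟨rfl, rfl⟩)
    · apply pp_sum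
      intro k hk
      have hkn : (k : ℕ) ≠ n := fun hc2 => (Finset.mem_erase.mp hk).1 (Fin.ext hc2)
      exact pp_smul' (pp_subO hϖO (hrc' k n' (Or.inr ⟨hkn, rfl⟩))) (hrc n' k (Or.inl ⟨rfl, hkn⟩))

lemma fin_rev_eq_n {n : ℕ} (a : Fin (2*n+1)) : ((a.rev : ℕ) = n ↔ (a : ℕ) = n) := by
  have := Fin.val_rev a; have := a.isLt; omega

lemma kv_inv {O : Subring E} {ϖ : E} (σ : E ≃+* E) (hσinv : ∀ x, σ (σ x) = x)
    (hσO : ∀ x ∈ O, σ x ∈ O) (hϖF : σ ϖ = ϖ) {n m : ℕ}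
    {h : Matrix (Fin (2*n+1)) (Fin (2*n+1)) E}
    (hh : h ∈ KV σ O ϖ n m) : h⁻¹ ∈ KV σ O ϖ n m := by
  obtain ⟨⟨hO, hrc, hc⟩, hU⟩ := hh
  refine ⟨⟨fun i j => ?_, fun i j hij => ?_, fun i j hij => ?_⟩, (uodd_inv σ hσinv hU).2⟩
  · rw [uodd_inv_apply σ hσinv hU]
    exact hσO _ (hO _ _)
  · rw [uodd_inv_apply σ hσinv hU]
    apply pp_map σ hσO hϖF
    rcases hij with ⟨hi, hj⟩ | ⟨hi, hj⟩
    · exact hrc _ _ (Or.inr ⟨fun hcon => hj ((fin_rev_eq_n j).mp hcon), (fin_rev_eq_n i).mpr hi⟩)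
    · exact hrc _ _ (Or.inl ⟨(fin_rev_eq_n j).mpr hj, fun hcon => hi ((fin_rev_eq_n i).mp hcon)⟩)
  · obtain ⟨hi, hj⟩ := hij
    rw [uodd_inv_apply σ hσinv hU]
    have h1 : h j.rev i.rev - 1 ∈ Ppow O ϖ (2*m : ℕ) :=
      hc _ _ ⟨(fin_rev_eq_n j).mpr hj, (fin_rev_eq_n i).mpr hi⟩
    have h2 := pp_map σ hσO hϖF h1
    rwa [map_sub, _root_.map_one] at h2

lemma kv_sub_jv {O : Subring E} {ϖ : E} (hϖO : ϖ ∈ O) {n m : ℕ} :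
    KVshape O ϖ n m ⊆ JVshape O ϖ n m := by
  rintro h ⟨hO, hrc, hc⟩
  refine ⟨hO, hrc, fun i j hij => ?_⟩
  have h1 := hc i j hij
  rw [show (2 * (m:ℤ)) = ((2*m : ℕ) : ℤ) by push_cast; ring] at h1
  exact pp_mono hϖO (by omega) h1

lemma scalar_jv {O : Subring E} {ϖ : E} (hϖO : ϖ ∈ O) {n m : ℕ} (hm : 1 ≤ m) {α : E}
    (hα : α - 1 ∈ Ppow O ϖ (m : ℤ)) :
    α • (1 : Matrix (Fin (2*n+1)) (Fin (2*n+1)) E) ∈ JVshape O ϖ n m := by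
  have hαO : α ∈ O := by
    have := pp_subO hϖO hα
    have h1 : α = (α - 1) + 1 := by ring
    rw [h1]; exact O.add_mem this O.one_mem
  refine ⟨fun i j => ?_, fun i j hij => ?_, fun i j hij => ?_⟩
  · rw [Matrix.smul_apply, Matrix.one_apply, smul_eq_mul]
    rcases eq_or_ne i j with h | h
    · rw [if_pos h, mul_one]; exact hαO
    · rw [if_neg h, mul_zero]; exact O.zero_mem
  · rw [Matrix.smul_apply, Matrix.one_apply, smul_eq_mul, if_neg, mul_zero]
    · exact pp_zero O ϖ _
    · rintro rfl
      rcases hij with ⟨h1, h2⟩ | ⟨h1, h2⟩ <;> [exact h2 h1; exact h1 h2]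
  · obtain ⟨hi, hj⟩ := hij
    have : i = j := Fin.ext (by omega)
    rw [Matrix.smul_apply, Matrix.one_apply, if_pos this, smul_eq_mul, mul_one]
    exact hα

end ShapeAux


/-- For `n ≥ 1` and even `2m > 0`, the subgroup of `U_{2n+1}` generated by
`K_{2m}^V` together with the central elements `{α·1 : α ᾱ = 1, α ∈ 1+𝔭_E^m}` is exactly
`J_{2m}^V`. -/
theorem statement7 (E : Type) [Field E] [CharZero E]
    (σ : E ≃+* E) (hσinv : ∀ x, σ (σ x) = x) (hσne : σ ≠ RingEquiv.refl E)
    (O : Subring E) (hval : ∀ x : E, x ∈ O ∨ x⁻¹ ∈ O) (hσO : ∀ x ∈ O, σ x ∈ O)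
    (ϖ : E) (hϖO : ϖ ∈ O) (hϖ0 : ϖ ≠ 0) (hϖnu : ϖ⁻¹ ∉ O)
    (hϖgen : ∀ x ∈ O, x⁻¹ ∉ O → x ∈ Ppow O ϖ 1) (hϖF : σ ϖ = ϖ)
    (hodd : (2 : E)⁻¹ ∈ O)
    (n m : ℕ) (hn : 1 ≤ n) (hm : 1 ≤ m) :
    (Submonoid.closure
        ((KV σ O ϖ n m ∪
            {c | ∃ α : E, α * σ α = 1 ∧ α - 1 ∈ Ppow O ϖ (m : ℤ) ∧
              c = α • (1 : Matrix (Fin (2 * n + 1)) (Fin (2 * n + 1)) E)}) ∪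
          (fun a => a⁻¹) ''
            (KV σ O ϖ n m ∪
              {c | ∃ α : E, α * σ α = 1 ∧ α - 1 ∈ Ppow O ϖ (m : ℤ) ∧
                c = α • (1 : Matrix (Fin (2 * n + 1)) (Fin (2 * n + 1)) E)})) :
      Set (Matrix (Fin (2 * n + 1)) (Fin (2 * n + 1)) E)) =
      JVshape O ϖ n m ∩ UOddSet σ n := by
  have h2 : (2:E) ≠ 0 := two_ne_zero
  have hn2 : n < 2*n+1 := by omega
  ext g
  simp only [SetLike.mem_coe]
  constructor
  · intro hg
    induction hg using Submonoid.closure_induction with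
    | one => exact ⟨jv_one, uodd_one σ n⟩
    | mul x y _ _ ihx ihy => exact ⟨jv_mul hϖO ihx.1 ihy.1, uodd_mul σ ihx.2 ihy.2⟩
    | mem x hx =>
      rcases hx with (hkv | ⟨α, hα1, hα2, rfl⟩) | ⟨a, ha, rfl⟩
      · exact ⟨kv_sub_jv hϖO hkv.1, hkv.2⟩
      · exact ⟨scalar_jv hϖO hm hα2, uodd_smul σ hα1⟩
      · rcases ha with hkv | ⟨α, hα1, hα2, rfl⟩
        · have hi := kv_inv σ hσinv hσO hϖF hkv
          exact ⟨kv_sub_jv hϖO hi.1, hi.2⟩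
        · have hinv : (α • (1 : Matrix (Fin (2*n+1)) (Fin (2*n+1)) E))⁻¹ = σ α • 1 := by
            apply Matrix.inv_eq_left_inv
            rw [Matrix.smul_mul, Matrix.one_mul, smul_smul, mul_comm (σ α) α, hα1, one_smul]
          show (α • (1 : Matrix (Fin (2*n+1)) (Fin (2*n+1)) E))⁻¹ ∈
            JVshape O ϖ n m ∩ UOddSet σ n
          rw [hinv]
          refine ⟨scalar_jv hϖO hm ?_, uodd_smul σ ?_⟩
          · have h3 := pp_map σ hσO hϖF hα2
            rwa [map_sub, _root_.map_one] at h3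
          · rw [hσinv α, mul_comm]
            exact hα1
  · intro hh
    obtain ⟨⟨hO, hrc, hc⟩, hU⟩ := hh
    set n' : Fin (2*n+1) := ⟨n, hn2⟩ with hn'
    set β := g n' n' with hβ
    have hx : β - 1 ∈ Ppow O ϖ (m:ℤ) := hc n' n' ⟨rfl, rfl⟩
    have hxσ : σ β - 1 ∈ Ppow O ϖ (m:ℤ) := by
      have h3 := pp_map σ hσO hϖF hx
      rwa [map_sub, _root_.map_one] at h3
    have hkey : σ β * β - 1 ∈ Ppow O ϖ ((2*m : ℕ) : ℤ) := by
      have hent := congrFun (congrFun hU n') n'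
      have hL : ((g.map ⇑σ)ᵀ * wMat E (2*n+1) * g) n' n'
          = ∑ j : Fin (2*n+1), σ (g j.rev n') * g j n' := by
        rw [Matrix.mul_apply]
        refine Finset.sum_congr rfl fun j _ => ?_
        rw [mulW_apply]
        rfl
      have hR : wMat E (2*n+1) n' n' = 1 := by
        simp only [wMat]
        rw [if_pos]
        show n + n + 1 = 2*n+1
        omega
      rw [hL, hR, ← Finset.add_sum_erase _ _ (Finset.mem_univ n')] at hent
      have hrev : (n' : Fin (2*n+1)).rev = n' := Fin.ext (by rw [Fin.val_rev]; show 2*n+1 - (n+1) = n; omega)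
      rw [hrev, ← hβ] at hent
      have heq2 : σ β * β - 1
          = -∑ j ∈ Finset.univ.erase n', σ (g j.rev n') * g j n' := by
        linear_combination hent
      rw [heq2]
      apply pp_neg
      apply pp_sum
      intro j hj
      have hjn : (j : ℕ) ≠ n := fun hc2 => (Finset.mem_erase.mp hj).1 (Fin.ext hc2)
      have hm1 : g j.rev n' ∈ Ppow O ϖ (m:ℤ) :=
        hrc _ _ (Or.inr ⟨fun hcon => hjn ((fin_rev_eq_n j).mp hcon), rfl⟩)
      have hm2 : g j n' ∈ Ppow O ϖ (m:ℤ) := hrc _ _ (Or.inr ⟨hjn, rfl⟩)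
      have h3 := pp_mul hϖ0 (pp_map σ hσO hϖF hm1) hm2
      rwa [show ((m:ℤ) + (m:ℤ)) = ((2*m : ℕ) : ℤ) by push_cast; ring] at h3
    have hx1 : β - 1 ∈ Ppow O ϖ (1:ℤ) := by
      have h3 := pp_mono hϖO hm hx
      rwa [Nat.cast_one] at h3
    have hxσ1 : σ β - 1 ∈ Ppow O ϖ (1:ℤ) := by
      have h3 := pp_mono hϖO hm hxσ
      rwa [Nat.cast_one] at h3
    have hu1 : (1 + β) ≠ 0 ∧ (1 + β)⁻¹ ∈ O := by
      have h3 := pp_unit2 h2 hodd hϖO hϖnu hϖgen hx1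
      rwa [show (2:E) + (β - 1) = 1 + β by ring] at h3
    have hu2 : (1 + σ β) ≠ 0 ∧ (1 + σ β)⁻¹ ∈ O := by
      have h3 := pp_unit2 h2 hodd hϖO hϖnu hϖgen hxσ1
      rwa [show (2:E) + (σ β - 1) = 1 + σ β by ring] at h3
    have hne1 : (1 + β) ≠ 0 := hu1.1
    have hne2 : (1 + σ β) ≠ 0 := hu2.1
    set α := (1 + β) * (1 + σ β)⁻¹ with hα
    have hσα : σ α = (1 + σ β) * (1 + β)⁻¹ := by
      rw [hα, _root_.map_mul, map_add, _root_.map_one, map_inv₀, map_add, _root_.map_one,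
        hσinv]
    have hαnorm : α * σ α = 1 := by
      rw [hα, hσα]
      field_simp
    have hαm : α - 1 ∈ Ppow O ϖ (m:ℤ) := by
      have heq : α - 1 = (β - σ β) * (1 + σ β)⁻¹ := by
        rw [hα]
        field_simp
        ring
      rw [heq]
      refine pp_smul' hu2.2 ?_
      have h3 := pp_sub hx hxσ
      rwa [show β - 1 - (σ β - 1) = β - σ β by ring] at h3
    have hcen : σ α * β - 1 ∈ Ppow O ϖ ((2*m : ℕ) : ℤ) := by
      have heq : σ α * β - 1 = (σ β * β - 1) * (1 + β)⁻¹ := by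
        rw [hσα]
        field_simp
        ring
      rw [heq]
      exact pp_smul' hu1.2 hkey
    have hσαO : σ α ∈ O := by
      have h1 : σ α - 1 ∈ Ppow O ϖ (m:ℤ) := by
        have h3 := pp_map σ hσO hϖF hαm
        rwa [map_sub, _root_.map_one] at h3
      have h4 := pp_subO hϖO h1
      rw [show σ α = (σ α - 1) + 1 by ring]
      exact O.add_mem h4 O.one_mem
    have hσαnorm : σ α * σ (σ α) = 1 := by
      rw [hσinv α, mul_comm]
      exact hαnorm
    set k := σ α • g with hk
    have hkKV : k ∈ KV σ O ϖ n m := by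
      refine ⟨⟨fun i j => ?_, fun i j hij => ?_, fun i j hij => ?_⟩, ?_⟩
      · rw [hk, Matrix.smul_apply, smul_eq_mul]
        exact O.mul_mem hσαO (hO i j)
      · rw [hk, Matrix.smul_apply, smul_eq_mul]
        exact pp_smul hσαO (hrc i j hij)
      · obtain ⟨hi, hj⟩ := hij
        have hi' : i = n' := Fin.ext hi
        have hj' : j = n' := Fin.ext hj
        subst hi' hj'
        rw [hk, Matrix.smul_apply, smul_eq_mul, ← hβ,
          show (2 * (m:ℤ)) = ((2*m : ℕ) : ℤ) by push_cast; ring]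
        exact hcen
      · have hke : k = (σ α • (1 : Matrix (Fin (2*n+1)) (Fin (2*n+1)) E)) * g := by
          rw [hk, Matrix.smul_mul, Matrix.one_mul]
        rw [hke]
        exact uodd_mul σ (uodd_smul σ hσαnorm) hU
    have hdec : g = (α • (1 : Matrix (Fin (2*n+1)) (Fin (2*n+1)) E)) * k := by
      rw [hk, Matrix.smul_mul, Matrix.one_mul, smul_smul, hαnorm, one_smul]
    rw [hdec]
    exact Submonoid.mul_mem _
      (Submonoid.subset_closure (Or.inl (Or.inr ⟨α, hαnorm, hαm, rfl⟩)))
      (Submonoid.subset_closure (Or.inl (Or.inl hkKV)))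

end Newforms
end
end

section
/- Let n ≥ 1 and let 2m > 0 be an even integer. Define the 𝔬_E-lattices M_{2m} = (⊕_{i≠0} 𝔬_E e_i) ⊕ 𝔭_E^m e_0 and M_{2m}^* = (⊕_{i≠0} 𝔬_E e_i) ⊕ 𝔭_E^{−m} e_0 in V, and N_{2m} = (⊕_{i≠−n} 𝔬_E f_i) ⊕ 𝔭_E^m f_{−n} and N_{2m}^* = 𝔭_E^{−m} f_n ⊕ (⊕_{i≠n} 𝔬_E f_i) in W. Then K_{2m}^V = {h ∈ U(V) : (h−1)·M_{2m}^* ⊆ M_{2m}} and K_{2m}^W = {g ∈ U(W) : (g−1)·N_{2m}^* ⊆ N_{2m}}. -/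
open Matrix MeasureTheory
open scoped Classical

noncomputable section

namespace Newforms

section Aux

variable {E : Type} [Field E] {O : Subring E} {ϖ : E}

lemma mem_Ppow_iff (hϖ0 : ϖ ≠ 0) {m : ℤ} {x : E} :
    x ∈ Ppow O ϖ m ↔ ϖ ^ (-m) * x ∈ O := by
  constructor
  · rintro ⟨y, hy, rfl⟩
    rwa [← mul_assoc, ← zpow_add₀ hϖ0, neg_add_cancel, zpow_zero, one_mul]
  · intro hx
    refine ⟨ϖ ^ (-m) * x, hx, ?_⟩
    rw [← mul_assoc, ← zpow_add₀ hϖ0, add_neg_cancel, zpow_zero, one_mul]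

lemma Ppow_zero_iff {x : E} : x ∈ Ppow O ϖ 0 ↔ x ∈ O := by
  constructor
  · rintro ⟨y, hy, rfl⟩; simpa using hy
  · intro hx; exact ⟨x, hx, by simp⟩

lemma Ppow_zero_mem (m : ℤ) : (0 : E) ∈ Ppow O ϖ m := ⟨0, O.zero_mem, by ring⟩

lemma Ppow_shift (hϖ0 : ϖ ≠ 0) {a b : ℤ} {x : E} :
    ϖ ^ b * x ∈ Ppow O ϖ (a + b) ↔ x ∈ Ppow O ϖ a := by
  rw [mem_Ppow_iff hϖ0, mem_Ppow_iff hϖ0, ← mul_assoc, ← zpow_add₀ hϖ0,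
    show -(a + b) + b = -a by ring]

lemma Ppow_mul_mem (hϖ0 : ϖ ≠ 0) {a b : ℤ} {x y : E}
    (hx : x ∈ Ppow O ϖ a) (hy : y ∈ Ppow O ϖ b) : x * y ∈ Ppow O ϖ (a + b) := by
  rw [mem_Ppow_iff hϖ0] at hx hy ⊢
  have h : ϖ ^ (-(a + b)) * (x * y) = ϖ ^ (-a) * x * (ϖ ^ (-b) * y) := by
    rw [show -(a + b) = -a + -b by ring, zpow_add₀ hϖ0]; ring
  rw [h]; exact O.mul_mem hx hy

lemma Ppow_mono (hϖ0 : ϖ ≠ 0) (hϖO : ϖ ∈ O) {a b : ℤ} (hab : a ≤ b) {x : E}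
    (hx : x ∈ Ppow O ϖ b) : x ∈ Ppow O ϖ a := by
  rw [mem_Ppow_iff hϖ0] at hx ⊢
  obtain ⟨k, hk⟩ : ∃ k : ℕ, b - a = (k : ℤ) := ⟨(b - a).toNat, by omega⟩
  have h1 : ϖ ^ (b - a) ∈ O := by rw [hk, zpow_natCast]; exact O.pow_mem hϖO k
  have h2 : ϖ ^ (-a) * x = ϖ ^ (b - a) * (ϖ ^ (-b) * x) := by
    rw [← mul_assoc, ← zpow_add₀ hϖ0, show b - a + -b = -a by ring]
  rw [h2]; exact O.mul_mem h1 hx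

lemma Ppow_subset_O (hϖ0 : ϖ ≠ 0) (hϖO : ϖ ∈ O) {a : ℤ} (ha : 0 ≤ a) {x : E}
    (hx : x ∈ Ppow O ϖ a) : x ∈ O :=
  Ppow_zero_iff.mp (Ppow_mono hϖ0 hϖO ha hx)

lemma Ppow_sum_mem (hϖ0 : ϖ ≠ 0) {m : ℤ} {ι : Type*} {s : Finset ι} {f : ι → E}
    (h : ∀ i ∈ s, f i ∈ Ppow O ϖ m) : (∑ i ∈ s, f i) ∈ Ppow O ϖ m := by
  rw [mem_Ppow_iff hϖ0, Finset.mul_sum]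
  exact Subring.sum_mem O fun i hi => (mem_Ppow_iff hϖ0).mp (h i hi)

lemma mulVec_indicator {k : ℕ} (A : Matrix (Fin k) (Fin k) E) (j : Fin k) (c : E) (i : Fin k) :
    A.mulVec (fun l => if l = j then c else 0) i = A i j * c := by
  simp [Matrix.mulVec, dotProduct, mul_ite]

lemma mulVec_sub_entry {k : ℕ} (A : Matrix (Fin k) (Fin k) E) (u : Fin k → E) (i : Fin k) :
    A.mulVec u i - u i = ∑ j, (A i j - if i = j then (1 : E) else 0) * u j := by
  simp only [Matrix.mulVec, dotProduct, sub_mul, ite_mul, one_mul, zero_mul,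
    Finset.sum_sub_distrib, Finset.sum_ite_eq, Finset.mem_univ, if_true]

lemma lattice_iff_entry (hϖ0 : ϖ ≠ 0) {k : ℕ} (a b : Fin k → ℤ)
    (g : Matrix (Fin k) (Fin k) E) :
    (∀ u : Fin k → E, (∀ i, u i ∈ Ppow O ϖ (-(b i))) →
        ∀ i, g.mulVec u i - u i ∈ Ppow O ϖ (a i)) ↔
    ∀ i j, g i j - (if i = j then 1 else 0) ∈ Ppow O ϖ (a i + b j) := by
  constructor
  · intro H i j
    have hu : ∀ l, (if l = j then ϖ ^ (-(b j)) else 0) ∈ Ppow O ϖ (-(b l)) := by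
      intro l
      split
      · next hl => subst hl; exact ⟨1, O.one_mem, (mul_one _).symm⟩
      · exact Ppow_zero_mem _
    have h1 := H (fun l => if l = j then ϖ ^ (-(b j)) else 0) hu i
    simp only [mulVec_indicator] at h1
    have e : g i j * ϖ ^ (-(b j)) - (if i = j then ϖ ^ (-(b j)) else 0)
        = ϖ ^ (-(b j)) * (g i j - if i = j then 1 else 0) := by
      split <;> ring
    rw [e, show a i = a i + b j + -(b j) by ring] at h1
    exact (Ppow_shift hϖ0).mp h1
  · intro H u hu i
    rw [mulVec_sub_entry]
    refine Ppow_sum_mem hϖ0 fun j _ => ?_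
    have h1 := Ppow_mul_mem hϖ0 (H i j) (hu j)
    rwa [show a i + b j + -(b j) = a i by ring] at h1

lemma latSet_iff {k : ℕ} (p : ℕ) (μ : ℤ) (u : Fin k → E) :
    ((∀ i : Fin k, (i : ℕ) ≠ p → u i ∈ O) ∧
      ∀ i : Fin k, (i : ℕ) = p → u i ∈ Ppow O ϖ μ) ↔
    ∀ i : Fin k, u i ∈ Ppow O ϖ (if (i : ℕ) = p then μ else 0) := by
  constructor
  · rintro ⟨h1, h2⟩ i
    by_cases hi : (i : ℕ) = p
    · rw [if_pos hi]; exact h2 i hi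
    · rw [if_neg hi]; exact Ppow_zero_iff.mpr (h1 i hi)
  · intro H
    refine ⟨fun i hi => ?_, fun i hi => ?_⟩
    · have h3 := H i
      rw [if_neg hi] at h3
      exact Ppow_zero_iff.mp h3
    · have h3 := H i
      rwa [if_pos hi] at h3

end Aux

/-- For `n ≥ 1` and even `2m > 0`, with the lattices
`M_{2m}, M_{2m}^* ⊆ V` and `N_{2m}, N_{2m}^* ⊆ W`:
`K_{2m}^V = {h ∈ U(V) : (h−1)·M_{2m}^* ⊆ M_{2m}}` and
`K_{2m}^W = {g ∈ U(W) : (g−1)·N_{2m}^* ⊆ N_{2m}}`. -/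
theorem statement8 (E : Type) [Field E] [CharZero E]
    (σ : E ≃+* E) (hσinv : ∀ x, σ (σ x) = x) (hσne : σ ≠ RingEquiv.refl E)
    (O : Subring E) (hval : ∀ x : E, x ∈ O ∨ x⁻¹ ∈ O) (hσO : ∀ x ∈ O, σ x ∈ O)
    (ϖ : E) (hϖO : ϖ ∈ O) (hϖ0 : ϖ ≠ 0) (hϖnu : ϖ⁻¹ ∉ O)
    (hϖgen : ∀ x ∈ O, x⁻¹ ∉ O → x ∈ Ppow O ϖ 1) (hϖF : σ ϖ = ϖ)
    (hodd : (2 : E)⁻¹ ∈ O)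
    (n m : ℕ) (hn : 1 ≤ n) (hm : 1 ≤ m) :
    KV σ O ϖ n m =
      {h | h ∈ UOddSet σ n ∧
        ∀ u ∈ MVlat O ϖ n (-(m : ℤ)), h.mulVec u - u ∈ MVlat O ϖ n (m : ℤ)} ∧
    KW σ O ϖ n m =
      {g | g ∈ USet σ n ∧
        ∀ u ∈ NWdual O ϖ n (-(m : ℤ)), g.mulVec u - u ∈ NWlat O ϖ n (m : ℤ)} := by
  constructor
  · -- the odd case `K_{2m}^V`
    ext h
    have entry := lattice_iff_entry (O := O) hϖ0
      (fun i : Fin (2 * n + 1) => if (i : ℕ) = n then (m : ℤ) else 0)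
      (fun j : Fin (2 * n + 1) => if (j : ℕ) = n then (m : ℤ) else 0) h
    have hlatV : (∀ u ∈ MVlat O ϖ n (-(m : ℤ)), h.mulVec u - u ∈ MVlat O ϖ n (m : ℤ)) ↔
        ∀ i j : Fin (2 * n + 1), h i j - (if i = j then 1 else 0) ∈ Ppow O ϖ
          ((if (i : ℕ) = n then (m : ℤ) else 0) + (if (j : ℕ) = n then (m : ℤ) else 0)) := by
      rw [← entry]
      constructor
      · intro H u hu i
        have h2 : u ∈ MVlat O ϖ n (-(m : ℤ)) := by
          refine (latSet_iff n (-(m : ℤ)) u).mpr fun i => ?_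
          have h3 := hu i
          by_cases hi : (i : ℕ) = n
          · rwa [if_pos hi] at h3 ⊢
          · rw [if_neg hi] at h3 ⊢; rwa [neg_zero] at h3
        exact ((latSet_iff n (m : ℤ) _).mp (H u h2)) i
      · intro H u hu
        have hu' := (latSet_iff n (-(m : ℤ)) u).mp hu
        refine (latSet_iff n (m : ℤ) _).mpr fun i => ?_
        have hu'' : ∀ i : Fin (2 * n + 1),
            u i ∈ Ppow O ϖ (-(if (i : ℕ) = n then (m : ℤ) else 0)) := by
          intro i
          have h3 := hu' i
          by_cases hi : (i : ℕ) = n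
          · rwa [if_pos hi] at h3 ⊢
          · rw [if_neg hi] at h3 ⊢; rwa [neg_zero]
        exact H u hu'' i
    have keyV : h ∈ KVshape O ϖ n m ↔
        ∀ i j : Fin (2 * n + 1), h i j - (if i = j then 1 else 0) ∈ Ppow O ϖ
          ((if (i : ℕ) = n then (m : ℤ) else 0) + (if (j : ℕ) = n then (m : ℤ) else 0)) := by
      constructor
      · rintro ⟨hO, hcross, hcen⟩ i j
        by_cases hi : (i : ℕ) = n <;> by_cases hj : (j : ℕ) = n
        · have hij : i = j := Fin.ext (by omega)
          rw [if_pos hij, if_pos hi, if_pos hj, show (m : ℤ) + (m : ℤ) = 2 * m by ring]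
          exact hcen i j ⟨hi, hj⟩
        · have hij : i ≠ j := by rw [Ne, Fin.ext_iff]; omega
          rw [if_neg hij, sub_zero, if_pos hi, if_neg hj, add_zero]
          exact hcross i j (Or.inl ⟨hi, hj⟩)
        · have hij : i ≠ j := by rw [Ne, Fin.ext_iff]; omega
          rw [if_neg hij, sub_zero, if_neg hi, if_pos hj, zero_add]
          exact hcross i j (Or.inr ⟨hi, hj⟩)
        · rw [if_neg hi, if_neg hj, add_zero]
          refine Ppow_zero_iff.mpr (O.sub_mem (hO i j) ?_)
          split
          · exact O.one_mem
          · exact O.zero_mem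
      · intro H
        refine ⟨fun i j => ?_, fun i j hc => ?_, fun i j hc => ?_⟩
        · have h1 : h i j - (if i = j then 1 else 0) ∈ O :=
            Ppow_subset_O hϖ0 hϖO (by split_ifs <;> omega) (H i j)
          have h2 : (if i = j then (1 : E) else 0) ∈ O := by
            split
            · exact O.one_mem
            · exact O.zero_mem
          have h3 := O.add_mem h1 h2
          rwa [sub_add_cancel] at h3
        · rcases hc with ⟨hi, hj⟩ | ⟨hi, hj⟩
          · have hij : i ≠ j := by rw [Ne, Fin.ext_iff]; omega
            have h3 := H i j
            rwa [if_neg hij, sub_zero, if_pos hi, if_neg hj, add_zero] at h3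
          · have hij : i ≠ j := by rw [Ne, Fin.ext_iff]; omega
            have h3 := H i j
            rwa [if_neg hij, sub_zero, if_neg hi, if_pos hj, zero_add] at h3
        · obtain ⟨hi, hj⟩ := hc
          have hij : i = j := Fin.ext (by omega)
          have h3 := H i j
          rwa [if_pos hij, if_pos hi, if_pos hj,
            show (m : ℤ) + (m : ℤ) = 2 * m by ring] at h3
    constructor
    · rintro ⟨hs, hU⟩
      exact ⟨hU, hlatV.mpr (keyV.mp hs)⟩
    · rintro ⟨hU, hl⟩
      exact ⟨keyV.mpr (hlatV.mp hl), hU⟩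
  · -- the even case `K_{2m}^W`
    ext g
    have entry := lattice_iff_entry (O := O) hϖ0
      (fun i : Fin (2 * n) => if (i : ℕ) = 2 * n - 1 then (m : ℤ) else 0)
      (fun j : Fin (2 * n) => if (j : ℕ) = 0 then (m : ℤ) else 0) g
    have hlatW : (∀ u ∈ NWdual O ϖ n (-(m : ℤ)), g.mulVec u - u ∈ NWlat O ϖ n (m : ℤ)) ↔
        ∀ i j : Fin (2 * n), g i j - (if i = j then 1 else 0) ∈ Ppow O ϖ
          ((if (i : ℕ) = 2 * n - 1 then (m : ℤ) else 0) +
            (if (j : ℕ) = 0 then (m : ℤ) else 0)) := by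
      rw [← entry]
      constructor
      · intro H u hu i
        have h2 : u ∈ NWdual O ϖ n (-(m : ℤ)) := by
          refine (latSet_iff 0 (-(m : ℤ)) u).mpr fun i => ?_
          have h3 := hu i
          by_cases hi : (i : ℕ) = 0
          · rwa [if_pos hi] at h3 ⊢
          · rw [if_neg hi] at h3 ⊢; rwa [neg_zero] at h3
        exact ((latSet_iff (2 * n - 1) (m : ℤ) _).mp (H u h2)) i
      · intro H u hu
        have hu' := (latSet_iff 0 (-(m : ℤ)) u).mp hu
        refine (latSet_iff (2 * n - 1) (m : ℤ) _).mpr fun i => ?_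
        have hu'' : ∀ i : Fin (2 * n),
            u i ∈ Ppow O ϖ (-(if (i : ℕ) = 0 then (m : ℤ) else 0)) := by
          intro i
          have h3 := hu' i
          by_cases hi : (i : ℕ) = 0
          · rwa [if_pos hi] at h3 ⊢
          · rw [if_neg hi] at h3 ⊢; rwa [neg_zero]
        exact H u hu'' i
    have keyW : g ∈ KWshape O ϖ n m ↔
        ∀ i j : Fin (2 * n), g i j - (if i = j then 1 else 0) ∈ Ppow O ϖ
          ((if (i : ℕ) = 2 * n - 1 then (m : ℤ) else 0) +
            (if (j : ℕ) = 0 then (m : ℤ) else 0)) := by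
      constructor
      · rintro ⟨hO, hc⟩ i j
        by_cases hi : (i : ℕ) = 2 * n - 1 <;> by_cases hj : (j : ℕ) = 0
        · have hij : i ≠ j := by rw [Ne, Fin.ext_iff]; omega
          rw [if_neg hij, sub_zero, if_pos hi, if_pos hj,
            show (m : ℤ) + (m : ℤ) = 2 * m by ring]
          exact (hc i j).2.2.1 ⟨hi, hj⟩
        · rw [if_pos hi, if_neg hj, add_zero]
          by_cases hj2 : (j : ℕ) = 2 * n - 1
          · have hij : i = j := Fin.ext (by omega)
            rw [if_pos hij]
            exact (hc i j).2.2.2.2 ⟨hi, hj2⟩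
          · have hij : i ≠ j := by rw [Ne, Fin.ext_iff]; omega
            rw [if_neg hij, sub_zero]
            exact (hc i j).2.2.2.1 ⟨hi, by omega, by have := j.isLt; omega⟩
        · rw [if_neg hi, if_pos hj, zero_add]
          by_cases hi2 : (i : ℕ) = 0
          · have hij : i = j := Fin.ext (by omega)
            rw [if_pos hij]
            exact (hc i j).1 ⟨hi2, hj⟩
          · have hij : i ≠ j := by rw [Ne, Fin.ext_iff]; omega
            rw [if_neg hij, sub_zero]
            exact (hc i j).2.1 ⟨by omega, by have := i.isLt; omega, hj⟩
        · rw [if_neg hi, if_neg hj, add_zero]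
          refine Ppow_zero_iff.mpr (O.sub_mem (hO i j) ?_)
          split
          · exact O.one_mem
          · exact O.zero_mem
      · intro H
        refine ⟨fun i j => ?_, fun i j => ⟨?_, ?_, ?_, ?_, ?_⟩⟩
        · have h1 : g i j - (if i = j then 1 else 0) ∈ O :=
            Ppow_subset_O hϖ0 hϖO (by split_ifs <;> omega) (H i j)
          have h2 : (if i = j then (1 : E) else 0) ∈ O := by
            split
            · exact O.one_mem
            · exact O.zero_mem
          have h3 := O.add_mem h1 h2
          rwa [sub_add_cancel] at h3
        · rintro ⟨hi, hj⟩
          have hij : i = j := Fin.ext (by omega)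
          have h3 := H i j
          rwa [if_pos hij, if_neg (show ¬(i : ℕ) = 2 * n - 1 by omega), if_pos hj,
            zero_add] at h3
        · rintro ⟨hi1, hi2, hj⟩
          have hij : i ≠ j := by rw [Ne, Fin.ext_iff]; omega
          have h3 := H i j
          rwa [if_neg hij, sub_zero, if_neg (show ¬(i : ℕ) = 2 * n - 1 by omega),
            if_pos hj, zero_add] at h3
        · rintro ⟨hi, hj⟩
          have hij : i ≠ j := by rw [Ne, Fin.ext_iff]; omega
          have h3 := H i j
          rwa [if_neg hij, sub_zero, if_pos hi, if_pos hj,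
            show (m : ℤ) + (m : ℤ) = 2 * m by ring] at h3
        · rintro ⟨hi, hj1, hj2⟩
          have hij : i ≠ j := by rw [Ne, Fin.ext_iff]; omega
          have h3 := H i j
          rwa [if_neg hij, sub_zero, if_pos hi, if_neg (show ¬(j : ℕ) = 0 by omega),
            add_zero] at h3
        · rintro ⟨hi, hj⟩
          have hij : i = j := Fin.ext (by omega)
          have h3 := H i j
          rwa [if_pos hij, if_pos hi, if_neg (show ¬(j : ℕ) = 0 by omega),
            add_zero] at h3
    constructor
    · rintro ⟨hs, hU⟩
      exact ⟨hU, hlatW.mpr (keyW.mp hs)⟩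
    · rintro ⟨hU, hl⟩
      exact ⟨keyW.mpr (hlatW.mp hl), hU⟩

end Newforms
end
end
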